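/- (Pólya's Theorem with rational coefficients) Let F ∈ ℚ[Y₁, …, Y_m] be a homogeneous polynomial with F(y) > 0 for all y ∈ [0,∞)^m \ {0}. Then there exists k ∈ ℕ such that (Y₁ + ⋯ + Y_m)^k · F has only nonnegative (rational) coefficients. -/

import Mathlib

open MvPolynomial Finset

lemma polya_descFactorial_cast (n k : ℕ) :
    ((n.descFactorial k : ℝ)) = ∏ j ∈ Finset.range k, ((n:ℝ) - j) := by
  induction k with
  | zero => simp
  | succ k ih =>
    rw [Nat.descFactorial_succ, Finset.prod_range_succ, ← ih]
    rcases le_or_gt k n with h | h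
    · push_cast [h]; ring
    · have h1 : n.descFactorial k = 0 := Nat.descFactorial_eq_zero_iff_lt.2 h
      have h2 : n - k = 0 := by omega
      simp [h1, h2]

lemma polya_prod_diff {ι : Type*} (s : Finset ι) (f g : ι → ℝ)
    (hf : ∀ i ∈ s, |f i| ≤ 1) (hg : ∀ i ∈ s, |g i| ≤ 1) :
    |∏ i ∈ s, f i - ∏ i ∈ s, g i| ≤ ∑ i ∈ s, |f i - g i| := by
  induction s using Finset.cons_induction with
  | empty => simp
  | cons a s ha ih =>
    rw [Finset.prod_cons, Finset.prod_cons, Finset.sum_cons]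
    have hfa := hf a (Finset.mem_cons_self a s)
    have hgs : |∏ i ∈ s, g i| ≤ 1 := by
      rw [Finset.abs_prod]
      exact Finset.prod_le_one (fun i _ => abs_nonneg _)
        (fun i hi => hg i (Finset.mem_cons_of_mem hi))
    have key : f a * ∏ i ∈ s, f i - g a * ∏ i ∈ s, g i
        = f a * (∏ i ∈ s, f i - ∏ i ∈ s, g i) + (f a - g a) * ∏ i ∈ s, g i := by ring
    rw [key]
    calc |f a * (∏ i ∈ s, f i - ∏ i ∈ s, g i) + (f a - g a) * ∏ i ∈ s, g i|
        ≤ |f a| * |∏ i ∈ s, f i - ∏ i ∈ s, g i| + |f a - g a| * |∏ i ∈ s, g i| := by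
          refine (abs_add_le _ _).trans ?_; rw [abs_mul, abs_mul]
      _ ≤ 1 * (∑ i ∈ s, |f i - g i|) + |f a - g a| * 1 :=
          add_le_add
            (mul_le_mul hfa (ih (fun i hi => hf i (Finset.mem_cons_of_mem hi))
              (fun i hi => hg i (Finset.mem_cons_of_mem hi))) (abs_nonneg _) zero_le_one)
            (mul_le_mul_of_nonneg_left hgs (abs_nonneg _))
      _ = |f a - g a| + ∑ i ∈ s, |f i - g i| := by ring

lemma polya_coeff_sum_X_pow (m k : ℕ) (μ : Fin m →₀ ℕ) :
    MvPolynomial.coeff μ ((∑ i, MvPolynomial.X i : MvPolynomial (Fin m) ℚ) ^ k)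
      = if (∑ i, μ i) = k then (Nat.multinomial Finset.univ μ : ℚ) else 0 := by
  classical
  rw [Finset.sum_pow_eq_sum_piAntidiag, MvPolynomial.coeff_sum]
  have key : ∀ g : Fin m → ℕ,
      (∏ i, (MvPolynomial.X i : MvPolynomial (Fin m) ℚ) ^ g i)
        = MvPolynomial.monomial (Finsupp.equivFunOnFinite.symm g) 1 := by
    intro g
    rw [← MvPolynomial.prod_X_pow_eq_monomial]
    refine (Finset.prod_subset (Finset.subset_univ _) ?_).symm
    intro i _ hi
    have h0 : (Finsupp.equivFunOnFinite.symm g) i = 0 := by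
      simpa using (Finsupp.notMem_support_iff.mp hi)
    have h0' : g i = 0 := by simpa using h0
    rw [h0', pow_zero]
  have coeff_term : ∀ g : Fin m → ℕ,
      MvPolynomial.coeff μ ((Nat.multinomial Finset.univ g : MvPolynomial (Fin m) ℚ)
        * ∏ i, MvPolynomial.X i ^ g i)
      = (Nat.multinomial Finset.univ g : ℚ) * (if g = ⇑μ then 1 else 0) := by
    intro g
    rw [key g, ← MvPolynomial.C_eq_coe_nat, MvPolynomial.coeff_C_mul,
      MvPolynomial.coeff_monomial]
    simp only [Equiv.symm_apply_eq]
    rfl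
  simp_rw [coeff_term]
  by_cases h : (∑ i, μ i) = k
  · rw [if_pos h, Finset.sum_eq_single (⇑μ : Fin m → ℕ)]
    · simp
    · intro g _ hg
      rw [if_neg hg, mul_zero]
    · intro hmem
      exact absurd (Finset.mem_piAntidiag.2 ⟨h, fun i _ => Finset.mem_univ i⟩) hmem
  · rw [if_neg h]
    refine Finset.sum_eq_zero fun g hg => ?_
    have hgk := (Finset.mem_piAntidiag.1 hg).1
    rw [if_neg, mul_zero]
    rintro rfl
    exact h hgk

lemma polya_aeval_eq (m : ℕ) (F : MvPolynomial (Fin m) ℚ) (t : Fin m → ℝ) :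
    (aeval t F : ℝ) = ∑ b ∈ F.support, (((F.coeff b : ℚ) : ℝ) * ∏ i, t i ^ b i) := by
  conv_lhs => rw [F.as_sum]
  rw [map_sum]
  refine Finset.sum_congr rfl fun b _ => ?_
  rw [MvPolynomial.aeval_monomial]
  congr 1
  exact Finset.prod_subset (Finset.subset_univ _)
      (fun i _ hi => by simp [Finsupp.notMem_support_iff.1 hi])

lemma polya_estimate (m d N : ℕ) (hdN : d ≤ N) (hN : 0 < N) (b : Fin m →₀ ℕ)
    (hb : (∑ i, b i) = d) (t : Fin m → ℝ) (ht0 : ∀ i, 0 ≤ t i) (ht1 : ∀ i, t i ≤ 1) :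
    |(∏ i, ∏ j ∈ Finset.range (b i), (t i - j / N)) - ∏ i, t i ^ b i|
      ≤ d * d / N := by
  have hbd : ∀ i, b i ≤ d := by
    intro i
    rw [← hb]
    exact Finset.single_le_sum (f := fun i => b i) (fun _ _ => Nat.zero_le _) (Finset.mem_univ i)
  set s : Finset ((_ : Fin m) × ℕ) := Finset.univ.sigma (fun i => Finset.range (b i)) with hs
  have hcard : s.card = d := by
    rw [hs, Finset.card_sigma]
    simpa using hb
  have h1 : (∏ i, ∏ j ∈ Finset.range (b i), (t i - j / N))
      = ∏ p ∈ s, (t p.1 - (p.2 : ℝ) / N) := by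
    rw [hs, Finset.prod_sigma]
  have h2 : (∏ i, t i ^ b i) = ∏ p ∈ s, t p.1 := by
    rw [Finset.prod_sigma]
    exact Finset.prod_congr rfl fun i _ => by simp
  rw [h1, h2]
  have hjd : ∀ p ∈ s, (p.2 : ℝ) ≤ d := by
    rintro ⟨i, j⟩ hp
    have : j ∈ Finset.range (b i) := (Finset.mem_sigma.1 hp).2
    have hj : j < b i := Finset.mem_range.1 this
    exact_mod_cast Nat.cast_le.2 (le_trans (Nat.le_of_lt hj) (hbd i))
  have hNpos : (0:ℝ) < N := by exact_mod_cast hN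
  calc |(∏ p ∈ s, (t p.1 - (p.2:ℝ) / N)) - ∏ p ∈ s, t p.1|
      ≤ ∑ p ∈ s, |(t p.1 - (p.2:ℝ) / N) - t p.1| := by
        refine polya_prod_diff s _ _ ?_ ?_
        · rintro ⟨i, j⟩ hp
          have hj : (j:ℝ) ≤ d := hjd ⟨i, j⟩ hp
          have hjN : (j:ℝ) / N ≤ 1 := by
            rw [div_le_one hNpos]
            calc (j:ℝ) ≤ d := hj
              _ ≤ N := by exact_mod_cast hdN
          have hjN0 : (0:ℝ) ≤ (j:ℝ) / N := by positivity
          rw [abs_le]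
          constructor <;> simp only []
          · have := ht0 i; linarith
          · have := ht1 i; linarith
        · rintro ⟨i, j⟩ _
          rw [abs_le]
          constructor <;> [linarith [ht0 i]; exact ht1 i]
    _ ≤ ∑ _p ∈ s, (d : ℝ) / N := by
        refine Finset.sum_le_sum ?_
        rintro ⟨i, j⟩ hp
        have hj : (j:ℝ) ≤ d := hjd ⟨i, j⟩ hp
        have heq : |(t i - (j:ℝ)/N) - t i| = (j:ℝ)/N := by
          rw [show (t i - (j:ℝ)/N) - t i = -((j:ℝ)/N) by ring, abs_neg, abs_of_nonneg]
          positivity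
        rw [heq]
        gcongr
    _ = d * d / N := by
        rw [Finset.sum_const, hcard, nsmul_eq_mul]
        ring

lemma polya_desc_eq (m d N : ℕ) (hN : 0 < N) (μ b : Fin m →₀ ℕ) (hb : (∑ i, b i) = d) :
    (∏ i, ((μ i).descFactorial (b i) : ℝ))
      = (N:ℝ)^d * ∏ i, ∏ j ∈ Finset.range (b i), ((μ i : ℝ)/N - j/N) := by
  have hNpos : (0:ℝ) < N := by exact_mod_cast hN
  simp_rw [polya_descFactorial_cast, div_sub_div_same]
  have h2 : ∀ i : Fin m, ∏ j ∈ Finset.range (b i), (((μ i:ℝ) - j)/(N:ℝ))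
      = (∏ j ∈ Finset.range (b i), ((μ i:ℝ) - j)) / (N:ℝ)^(b i) := fun i => by
    rw [Finset.prod_div_distrib, Finset.prod_const, Finset.card_range]
  simp_rw [h2]
  rw [Finset.prod_div_distrib, Finset.prod_pow_eq_pow_sum, hb,
    mul_div_cancel₀]
  positivity

/-- **Pólya's Theorem with rational coefficients.** If `F ∈ ℚ[Y₁, …, Y_m]` is
homogeneous and strictly positive on the nonnegative orthant minus the origin,
then for some `k ∈ ℕ` the polynomial `(Y₁ + ⋯ + Y_m)^k ⬝ F` has only nonnegative
(rational) coefficients. -/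
theorem polya_rational (m d : ℕ) (F : MvPolynomial (Fin m) ℚ)
    (hhom : F.IsHomogeneous d)
    (hpos : ∀ y : Fin m → ℝ, (∀ i, 0 ≤ y i) → y ≠ 0 → 0 < aeval y F) :
    ∃ k : ℕ, ∀ μ : Fin m →₀ ℕ, 0 ≤ ((∑ i, X i) ^ k * F).coeff μ := by
  classical
  rcases Nat.eq_zero_or_pos m with hm | hm
  · subst hm
    refine ⟨1, fun μ => ?_⟩
    have : (∑ i : Fin 0, (X i : MvPolynomial (Fin 0) ℚ)) = 0 := by simp
    rw [this]
    simp
  -- degree facts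
  have hdeg : ∀ b ∈ F.support, (∑ i, b i) = d := by
    intro b hb
    have h1 : Finsupp.degree b = d := by
      have h2 := hhom (MvPolynomial.mem_support_iff.1 hb)
      rw [Finsupp.degree_eq_weight_one]
      exact h2
    rw [← h1, Finsupp.degree]
    exact (Finset.sum_subset (Finset.subset_univ _)
      (fun i _ hi => Finsupp.notMem_support_iff.1 hi)).symm
  -- minimum on the simplex
  have hcont : Continuous fun y : Fin m → ℝ => (aeval y F : ℝ) := by
    have h : ∀ y : Fin m → ℝ, aeval y F = eval y (F.map (algebraMap ℚ ℝ)) := by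
      intro y; rw [MvPolynomial.eval_map, MvPolynomial.aeval_def]
    simp_rw [h]
    exact MvPolynomial.continuous_eval _
  have hne : (stdSimplex ℝ (Fin m)).Nonempty :=
    ⟨_, ite_eq_mem_stdSimplex ℝ (⟨0, hm⟩ : Fin m)⟩
  obtain ⟨y₀, hy₀, hmin⟩ :=
    (isCompact_stdSimplex ℝ (Fin m)).exists_isMinOn hne hcont.continuousOn
  set ε : ℝ := aeval y₀ F with hεdef
  have hε : 0 < ε := by
    refine hpos y₀ hy₀.1 ?_
    intro h0
    have h2 := hy₀.2
    rw [h0] at h2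
    simp at h2
  set C : ℝ := ∑ b ∈ F.support, |((F.coeff b : ℚ) : ℝ)| with hCdef
  have hC0 : 0 ≤ C := Finset.sum_nonneg fun _ _ => abs_nonneg _
  set k : ℕ := Nat.ceil (C * d * d / ε) + 1 with hkdef
  refine ⟨k, fun μ => ?_⟩
  set N : ℕ := k + d with hNdef
  have hNpos : 0 < N := by omega
  have hNR : (0:ℝ) < N := by exact_mod_cast hNpos
  have hdN : d ≤ N := by omega
  have hCN : C * d * d / N < ε := by
    rw [div_lt_iff₀ hNR]
    have h1 : C * d * d / ε < N := by
      calc C * d * d / ε ≤ Nat.ceil (C * d * d / ε) := Nat.le_ceil _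
        _ < N := by exact_mod_cast (by omega : Nat.ceil (C * d * d / ε) < N)
    calc C * d * d = (C * d * d / ε) * ε := by field_simp
      _ < N * ε := by
          exact mul_lt_mul_of_pos_right h1 hε
      _ = ε * N := mul_comm _ _
  -- homogeneity of the product
  have hH : (((∑ i, X i) ^ k * F : MvPolynomial (Fin m) ℚ)).IsHomogeneous (k + d) := by
    have h1 : ((∑ i, X i : MvPolynomial (Fin m) ℚ)).IsHomogeneous 1 :=
      IsHomogeneous.sum _ _ _ (fun i _ => isHomogeneous_X _ i)
    have h2 := (h1.pow k).mul hhom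
    simpa using h2
  by_cases hμ : (∑ i, μ i) = N
  swap
  · have : ((∑ i, X i) ^ k * F).coeff μ = 0 := by
      refine hH.coeff_eq_zero ?_
      rw [Finsupp.degree]
      show (∑ i ∈ μ.support, μ i) ≠ k + d
      rw [Finset.sum_subset (Finset.subset_univ _)
        (fun i _ hi => Finsupp.notMem_support_iff.1 hi)]
      exact hμ
    rw [this]
  -- main case
  · set t : Fin m → ℝ := fun i => (μ i : ℝ) / N with htdef
    have ht0 : ∀ i, 0 ≤ t i := fun i => by positivity
    have htsum : (∑ i, t i) = 1 := by
      rw [htdef]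
      rw [← Finset.sum_div]
      rw [show (∑ i, ((μ i : ℝ))) = (N:ℝ) by exact_mod_cast congrArg Nat.cast hμ]
      field_simp
    have ht1 : ∀ i, t i ≤ 1 := by
      intro i
      have : t i ≤ ∑ j, t j :=
        Finset.single_le_sum (f := t) (fun j _ => ht0 j) (Finset.mem_univ i)
      rw [htsum] at this
      exact this
    have htΔ : t ∈ stdSimplex ℝ (Fin m) := ⟨ht0, htsum⟩
    have hFt : ε ≤ aeval t F := hmin htΔ
    -- coefficient formula
    have hc : ((∑ i, X i) ^ k * F).coeff μ
        = ∑ b ∈ F.support, (if b ≤ μ then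
            (Nat.multinomial Finset.univ ⇑(μ - b) : ℚ) * F.coeff b else 0) := by
      conv_lhs => rw [F.as_sum, Finset.mul_sum]
      rw [MvPolynomial.coeff_sum]
      refine Finset.sum_congr rfl fun b hb => ?_
      rw [MvPolynomial.coeff_mul_monomial']
      by_cases hle : b ≤ μ
      · rw [if_pos hle, if_pos hle, polya_coeff_sum_X_pow]
        have hsum : (∑ i, (μ - b) i) = k := by
          have h1 : ∀ i, (μ - b) i = μ i - b i := fun i => Finsupp.tsub_apply μ b i
          have h2 : ∀ i, b i ≤ μ i := fun i => hle i
          have h3 : (∑ i, (μ - b) i) + (∑ i, b i) = ∑ i, μ i := by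
            rw [← Finset.sum_add_distrib]
            refine Finset.sum_congr rfl fun i _ => ?_
            have := h2 i; rw [h1 i]; omega
          have := hdeg b hb
          omega
        rw [if_pos hsum]
      · rw [if_neg hle, if_neg hle]
    -- the positive quantity S
    set S : ℝ := ∑ b ∈ F.support,
        ((F.coeff b : ℚ) : ℝ) * ∏ i, ((μ i).descFactorial (b i) : ℝ) with hSdef
    -- key identity
    have hkey : ((∏ i, Nat.factorial (μ i) : ℕ) : ℝ) * ((((∑ i, X i) ^ k * F).coeff μ : ℚ) : ℝ)
        = (Nat.factorial k : ℝ) * S := by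
      rw [hc, hSdef]
      push_cast
      rw [Finset.mul_sum, Finset.mul_sum]
      refine Finset.sum_congr rfl fun b hb => ?_
      by_cases hle : b ≤ μ
      · rw [if_pos hle]
        have hsum : (∑ i, (μ - b) i) = k := by
          have h1 : ∀ i, (μ - b) i = μ i - b i := fun i => Finsupp.tsub_apply μ b i
          have h2 : ∀ i, b i ≤ μ i := fun i => hle i
          have h3 : (∑ i, (μ - b) i) + (∑ i, b i) = ∑ i, μ i := by
            rw [← Finset.sum_add_distrib]
            refine Finset.sum_congr rfl fun i _ => ?_
            have := h2 i; rw [h1 i]; omega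
          have := hdeg b hb
          omega
        have hnat : (∏ i, Nat.factorial (μ i)) * Nat.multinomial Finset.univ ⇑(μ - b)
            = Nat.factorial k * ∏ i, (μ i).descFactorial (b i) := by
          have h1 : ∀ i, (μ - b) i = μ i - b i := fun i => Finsupp.tsub_apply μ b i
          have h2 : (∏ i, Nat.factorial (μ i))
              = (∏ i, Nat.factorial ((μ - b) i)) * ∏ i, (μ i).descFactorial (b i) := by
            rw [← Finset.prod_mul_distrib]
            refine Finset.prod_congr rfl fun i _ => ?_
            rw [h1 i, Nat.factorial_mul_descFactorial (hle i)]
          rw [h2, mul_assoc, mul_comm (∏ i, (μ i).descFactorial (b i)), ← mul_assoc,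
            Nat.multinomial_spec, hsum]
        have hnat' := congrArg (fun n : ℕ => (n : ℝ)) hnat
        push_cast at hnat'
        push_cast
        linear_combination ((F.coeff b : ℚ) : ℝ) * hnat'
      · rw [if_neg hle]
        have : ∃ i, μ i < b i := by
          by_contra hcon
          push_neg at hcon
          exact hle (fun i => hcon i)
        obtain ⟨i, hi⟩ := this
        have hz : ((μ i).descFactorial (b i) : ℝ) = 0 := by
          rw [Nat.descFactorial_eq_zero_iff_lt.2 hi]; norm_num
        have hz2 : (∏ i, ((μ i).descFactorial (b i) : ℝ)) = 0 :=
          Finset.prod_eq_zero (Finset.mem_univ i) hz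
        rw [hz2]
        simp
    -- S = N^d * G
    set G : ℝ := ∑ b ∈ F.support,
        ((F.coeff b : ℚ) : ℝ) * ∏ i, ∏ j ∈ Finset.range (b i), (t i - j / N) with hGdef
    have hSG : S = (N:ℝ)^d * G := by
      rw [hSdef, hGdef, Finset.mul_sum]
      refine Finset.sum_congr rfl fun b hb => ?_
      rw [polya_desc_eq m d N hNpos μ b (hdeg b hb)]
      ring
    -- estimate |G - aeval t F|
    have hest : |G - aeval t F| ≤ C * d * d / N := by
      rw [polya_aeval_eq, hGdef, ← Finset.sum_sub_distrib]
      calc |∑ b ∈ F.support, (((F.coeff b : ℚ) : ℝ)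
              * (∏ i, ∏ j ∈ Finset.range (b i), (t i - j / N))
            - ((F.coeff b : ℚ) : ℝ) * ∏ i, t i ^ b i)|
          ≤ ∑ b ∈ F.support, |((F.coeff b : ℚ) : ℝ)|
              * |(∏ i, ∏ j ∈ Finset.range (b i), (t i - j / N)) - ∏ i, t i ^ b i| := by
            refine (Finset.abs_sum_le_sum_abs _ _).trans ?_
            refine Finset.sum_le_sum fun b _ => ?_
            rw [← mul_sub, abs_mul]
        _ ≤ ∑ b ∈ F.support, |((F.coeff b : ℚ) : ℝ)| * ((d:ℝ) * d / N) := by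
            refine Finset.sum_le_sum fun b hb => ?_
            exact mul_le_mul_of_nonneg_left
              (polya_estimate m d N hdN hNpos b (hdeg b hb) t ht0 ht1) (abs_nonneg _)
        _ = C * d * d / N := by
            rw [← Finset.sum_mul, ← hCdef]; ring
    -- conclude
    have hGpos : 0 ≤ G := by
      have h1 : aeval t F - G ≤ |G - aeval t F| := by
        rw [abs_sub_comm]; exact le_abs_self _
      nlinarith [hFt, hCN, hest]
    have hS0 : 0 ≤ S := by
      rw [hSG]; positivity
    have hfin : (0:ℝ) ≤ ((((∑ i, X i) ^ k * F).coeff μ : ℚ) : ℝ) := by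
      have hfacpos : (0:ℝ) < ((∏ i, Nat.factorial (μ i) : ℕ) : ℝ) := by
        have : 0 < ∏ i, Nat.factorial (μ i) :=
          Finset.prod_pos fun i _ => Nat.factorial_pos _
        exact_mod_cast this
      have h2 : (0:ℝ) ≤ (Nat.factorial k : ℝ) * S :=
        mul_nonneg (by positivity) hS0
      nlinarith [hkey]
    exact_mod_cast hfin
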